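/- arXiv:2009.14188 — 4 statements merged into one kernel-verified Lean document; each statement's English description precedes it below -/
import Mathlib

section
/- Let H₁ and H₂ be complex Hilbert spaces and let A : H₁ → H₁, B : H₂ → H₁, C : H₁ → H₂, and D, Z : H₂ → H₂ be bounded linear operators. Assume that 1 − ZD is invertible, set Φ = A + B(1 − ZD)⁻¹ZC (a bounded operator on H₁), and assume that 1 − Φ is invertible. Let M = [A, B; ZC, ZD] be the block operator on H₁ ⊕ H₂. Then 1 − M is invertible and (1 − Φ)⁻¹(1 + Φ) = P₁ ∘ (1 − M)⁻¹ ∘ (1 + M) ∘ ι₁, where ι₁ : H₁ → H₁ ⊕ H₂ is the inclusion x ↦ (x, 0) and P₁ : H₁ ⊕ H₂ → H₁ is the projection (x, y) ↦ x. -/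
open ContinuousLinearMap

variable {H₁ H₂ : Type*}
  [NormedAddCommGroup H₁] [InnerProductSpace ℂ H₁] [CompleteSpace H₁]
  [NormedAddCommGroup H₂] [InnerProductSpace ℂ H₂] [CompleteSpace H₂]

/-- The block operator `[A, B; C, D]` on `H₁ ⊕ H₂`, sending `(x, y)` to
`(A x + B y, C x + D y)`. -/
noncomputable def blockOp (A : H₁ →L[ℂ] H₁) (B : H₂ →L[ℂ] H₁)
    (C : H₁ →L[ℂ] H₂) (D : H₂ →L[ℂ] H₂) : (H₁ × H₂) →L[ℂ] (H₁ × H₂) :=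
  (A.comp (ContinuousLinearMap.fst ℂ H₁ H₂) + B.comp (ContinuousLinearMap.snd ℂ H₁ H₂)).prod
    (C.comp (ContinuousLinearMap.fst ℂ H₁ H₂) + D.comp (ContinuousLinearMap.snd ℂ H₁ H₂))

theorem schur_to_herglotz
    (A : H₁ →L[ℂ] H₁) (B : H₂ →L[ℂ] H₁) (C : H₁ →L[ℂ] H₂) (D Z : H₂ →L[ℂ] H₂)
    (hZD : IsUnit (1 - Z ∘L D))
    (Φ : H₁ →L[ℂ] H₁)
    (hΦdef : Φ = A + B ∘L (Ring.inverse (1 - Z ∘L D)) ∘L Z ∘L C)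
    (hΦ : IsUnit (1 - Φ))
    (M : (H₁ × H₂) →L[ℂ] (H₁ × H₂))
    (hMdef : M = blockOp A B (Z ∘L C) (Z ∘L D)) :
    IsUnit (1 - M) ∧
      (Ring.inverse (1 - Φ)) ∘L (1 + Φ) =
        (ContinuousLinearMap.fst ℂ H₁ H₂) ∘L (Ring.inverse (1 - M)) ∘L (1 + M) ∘L
          (ContinuousLinearMap.inl ℂ H₁ H₂) := by
  set Ei := Ring.inverse (1 - Z ∘L D) with hEi
  set Si := Ring.inverse (1 - Φ) with hSi
  have c1 : ∀ v : H₁, Si v - Si (Φ v) = v := by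
    intro v
    have := congrArg (fun f : H₁ →L[ℂ] H₁ => f v) (Ring.inverse_mul_cancel _ hΦ)
    simpa [mul_apply, map_sub] using this
  have c2 : ∀ v : H₁, Si v - Φ (Si v) = v := by
    intro v
    have := congrArg (fun f : H₁ →L[ℂ] H₁ => f v) (Ring.mul_inverse_cancel _ hΦ)
    simpa [mul_apply, map_sub] using this
  have c3 : ∀ v : H₂, Ei v - Ei (Z (D v)) = v := by
    intro v
    have := congrArg (fun f : H₂ →L[ℂ] H₂ => f v) (Ring.inverse_mul_cancel _ hZD)
    simpa [mul_apply, map_sub] using this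
  have c4 : ∀ v : H₂, Ei v - Z (D (Ei v)) = v := by
    intro v
    have := congrArg (fun f : H₂ →L[ℂ] H₂ => f v) (Ring.mul_inverse_cancel _ hZD)
    simpa [mul_apply, map_sub] using this
  have hphi : ∀ v : H₁, Φ v = A v + B (Ei (Z (C v))) := by
    intro v; rw [hΦdef]; simp
  have c1' : ∀ v : H₁, Si v - (Si (A v) + Si (B (Ei (Z (C v))))) = v := by
    intro v
    have h := c1 v
    rw [hphi v, map_add] at h
    exact h
  have c2' : ∀ v : H₁, Si v - (A (Si v) + B (Ei (Z (C (Si v))))) = v := by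
    intro v
    have h := c2 v
    rw [hphi (Si v)] at h
    exact h
  set N : (H₁ × H₂) →L[ℂ] (H₁ × H₂) :=
    blockOp Si (Si ∘L B ∘L Ei) (Ei ∘L (Z ∘L C) ∘L Si)
      (Ei + Ei ∘L (Z ∘L C) ∘L Si ∘L B ∘L Ei) with hN
  have h1 : N * (1 - M) = 1 := by
    ext v <;> simp [hN, hMdef, blockOp, mul_apply, map_sub, map_add]
    · convert c1' v using 1; abel
    · have f : Ei (Z (C (Si v))) -
          (Ei (Z (C (Si (A v)))) + Ei (Z (C (Si (B (Ei (Z (C v)))))))) = Ei (Z (C v)) := by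
        have h := congrArg (fun w => Ei (Z (C w))) (c1' v)
        simpa [map_sub, map_add] using h
      have tt := sub_eq_zero_of_eq f
      rw [← tt]; abel
    · have f : Si (B (Ei v)) - Si (B (Ei (Z (D v)))) = Si (B v) := by
        have h := congrArg (fun w => Si (B w)) (c3 v)
        simpa [map_sub] using h
      have tt := sub_eq_zero_of_eq f
      rw [← tt]; abel
    · have f : Ei (Z (C (Si (B (Ei v))))) - Ei (Z (C (Si (B (Ei (Z (D v))))))) =
          Ei (Z (C (Si (B v)))) := by
        have h := congrArg (fun w => Ei (Z (C (Si (B w))))) (c3 v)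
        simpa [map_sub] using h
      have tt : (Ei v - Ei (Z (D v)) - v) +
          (Ei (Z (C (Si (B (Ei v))))) - Ei (Z (C (Si (B (Ei (Z (D v))))))) -
            Ei (Z (C (Si (B v))))) = 0 := by
        rw [c3 v, f]; abel
      rw [← sub_eq_zero, ← tt]; abel
  have h2 : (1 - M) * N = 1 := by
    ext v <;> simp [hN, hMdef, blockOp, mul_apply, map_sub, map_add]
    · exact c2' v
    · have f := c4 (Z (C (Si v)))
      have tt := sub_eq_zero_of_eq f
      rw [← tt]; abel
    · have f := c2' (B (Ei v))
      have tt := sub_eq_zero_of_eq f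
      rw [← tt]; abel
    · have f1 := c4 v
      have f2 := c4 (Z (C (Si (B (Ei v)))))
      have tt : (Ei v - Z (D (Ei v)) - v) +
          (Ei (Z (C (Si (B (Ei v))))) - Z (D (Ei (Z (C (Si (B (Ei v))))))) -
            Z (C (Si (B (Ei v))))) = 0 := by
        rw [f1, f2]; abel
      rw [← sub_eq_zero, ← tt]; abel
  have hu : IsUnit (1 - M) := ⟨⟨1 - M, N, h2, h1⟩, rfl⟩
  have hinv : Ring.inverse (1 - M) = N := Ring.inverse_unit ⟨1 - M, N, h2, h1⟩
  refine ⟨hu, ?_⟩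
  rw [hinv]
  ext v
  simp [hN, hMdef, blockOp, map_add]
  rw [hphi v, map_add]
end

section
/- Let H₁ and H₂ be complex Hilbert spaces, let U = [A, B; C, D] be a block operator on H₁ ⊕ H₂ (with A : H₁ → H₁, B : H₂ → H₁, C : H₁ → H₂, D : H₂ → H₂ bounded) such that 1 − U is invertible, and let Z : H₂ → H₂ be a bounded operator such that 1 − Z is invertible and such that the block operator M = [A, B; ZC, ZD] on H₁ ⊕ H₂ has 1 − M invertible; define Θ = P₁ ∘ (1 − M)⁻¹ ∘ (1 + M) ∘ ι₁ : H₁ → H₁. Let W = i(1 + Z)(1 − Z)⁻¹, let T = i(1 + U)(1 − U)⁻¹ with block decomposition T = [T₁₁, T₁₂; T₂₁, T₂₂] on H₁ ⊕ H₂, and let Ψ = iΘ. Then the operator W + T₂₂ on H₂ is invertible and Ψ = T₁₁ − T₁₂(W + T₂₂)⁻¹T₂₁. -/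
open ContinuousLinearMap

variable {H₁ H₂ : Type*}
  [NormedAddCommGroup H₁] [InnerProductSpace ℂ H₁] [CompleteSpace H₁]
  [NormedAddCommGroup H₂] [InnerProductSpace ℂ H₂] [CompleteSpace H₂]

private lemma ccl {X₁ X₂ X₃ : Type*}
    [NormedAddCommGroup X₁] [NormedSpace ℂ X₁]
    [NormedAddCommGroup X₂] [NormedSpace ℂ X₂]
    [NormedAddCommGroup X₃] [NormedSpace ℂ X₃]
    {A : X₂ →L[ℂ] X₃} {B : X₃ →L[ℂ] X₂} (h : A ∘L B = 1)
    (f : X₁ →L[ℂ] X₃) : A ∘L (B ∘L f) = f := by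
  rw [← ContinuousLinearMap.comp_assoc, h, ContinuousLinearMap.one_def,
    ContinuousLinearMap.id_comp]

private lemma comp_one' {X₁ : Type*} [NormedAddCommGroup X₁] [NormedSpace ℂ X₁]
    (f : X₁ →L[ℂ] X₁) : f ∘L (1 : X₁ →L[ℂ] X₁) = f := mul_one f

set_option maxHeartbeats 1600000

theorem herglotz_to_nevanlinna
    (A : H₁ →L[ℂ] H₁) (B : H₂ →L[ℂ] H₁) (C : H₁ →L[ℂ] H₂) (D : H₂ →L[ℂ] H₂)
    (U : (H₁ × H₂) →L[ℂ] (H₁ × H₂)) (hUdef : U = blockOp A B C D)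
    (hU : IsUnit (1 - U))
    (Z : H₂ →L[ℂ] H₂) (hZ : IsUnit (1 - Z))
    (M : (H₁ × H₂) →L[ℂ] (H₁ × H₂)) (hMdef : M = blockOp A B (Z ∘L C) (Z ∘L D))
    (hM : IsUnit (1 - M))
    (Θ : H₁ →L[ℂ] H₁)
    (hΘdef : Θ = (ContinuousLinearMap.fst ℂ H₁ H₂) ∘L (Ring.inverse (1 - M)) ∘L (1 + M) ∘L
      (ContinuousLinearMap.inl ℂ H₁ H₂))
    (W : H₂ →L[ℂ] H₂) (hWdef : W = Complex.I • ((1 + Z) * Ring.inverse (1 - Z)))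
    (T : (H₁ × H₂) →L[ℂ] (H₁ × H₂))
    (hTdef : T = Complex.I • ((1 + U) * Ring.inverse (1 - U)))
    (T₁₁ : H₁ →L[ℂ] H₁)
    (hT₁₁ : T₁₁ = (ContinuousLinearMap.fst ℂ H₁ H₂) ∘L T ∘L (ContinuousLinearMap.inl ℂ H₁ H₂))
    (T₁₂ : H₂ →L[ℂ] H₁)
    (hT₁₂ : T₁₂ = (ContinuousLinearMap.fst ℂ H₁ H₂) ∘L T ∘L (ContinuousLinearMap.inr ℂ H₁ H₂))
    (T₂₁ : H₁ →L[ℂ] H₂)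
    (hT₂₁ : T₂₁ = (ContinuousLinearMap.snd ℂ H₁ H₂) ∘L T ∘L (ContinuousLinearMap.inl ℂ H₁ H₂))
    (T₂₂ : H₂ →L[ℂ] H₂)
    (hT₂₂ : T₂₂ = (ContinuousLinearMap.snd ℂ H₁ H₂) ∘L T ∘L (ContinuousLinearMap.inr ℂ H₁ H₂))
    (Ψ : H₁ →L[ℂ] H₁) (hΨdef : Ψ = Complex.I • Θ) :
    IsUnit (W + T₂₂) ∧ Ψ = T₁₁ - T₁₂ ∘L (Ring.inverse (W + T₂₂)) ∘L T₂₁ := by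
  obtain ⟨Q1, hQ1d⟩ : ∃ x, x = ContinuousLinearMap.fst ℂ H₁ H₂ := ⟨_, rfl⟩
  obtain ⟨Q2, hQ2d⟩ : ∃ x, x = ContinuousLinearMap.snd ℂ H₁ H₂ := ⟨_, rfl⟩
  obtain ⟨J1, hJ1d⟩ : ∃ x, x = ContinuousLinearMap.inl ℂ H₁ H₂ := ⟨_, rfl⟩
  obtain ⟨J2, hJ2d⟩ : ∃ x, x = ContinuousLinearMap.inr ℂ H₁ H₂ := ⟨_, rfl⟩
  obtain ⟨E, hEd⟩ : ∃ x, x = Ring.inverse (1 - U) := ⟨_, rfl⟩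
  obtain ⟨F, hFd⟩ : ∃ x, x = Ring.inverse (1 - Z) := ⟨_, rfl⟩
  obtain ⟨N, hNd⟩ : ∃ x, x = Ring.inverse (1 - M) := ⟨_, rfl⟩
  rw [← hQ1d, ← hNd, ← hJ1d] at hΘdef
  rw [← hEd] at hTdef
  rw [← hFd] at hWdef
  rw [← hQ1d, ← hJ1d] at hT₁₁
  rw [← hQ1d, ← hJ2d] at hT₁₂
  rw [← hQ2d, ← hJ1d] at hT₂₁
  rw [← hQ2d, ← hJ2d] at hT₂₂
  -- inverse cancellation facts, in composition form
  have hE1 : (1 - U) ∘L E = 1 := by rw [hEd, ← mul_def]; exact Ring.mul_inverse_cancel _ hU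
  have hE2 : E ∘L (1 - U) = 1 := by rw [hEd, ← mul_def]; exact Ring.inverse_mul_cancel _ hU
  have hF1 : F ∘L (1 - Z) = 1 := by rw [hFd, ← mul_def]; exact Ring.inverse_mul_cancel _ hZ
  have hF2 : (1 - Z) ∘L F = 1 := by rw [hFd, ← mul_def]; exact Ring.mul_inverse_cancel _ hZ
  have hN1 : (1 - M) ∘L N = 1 := by rw [hNd, ← mul_def]; exact Ring.mul_inverse_cancel _ hM
  have hN2 : N ∘L (1 - M) = 1 := by rw [hNd, ← mul_def]; exact Ring.inverse_mul_cancel _ hM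
  -- projection facts
  have hQ1J1 : Q1 ∘L J1 = 1 := by ext x; simp [hQ1d, hJ1d]
  have hQ2J2 : Q2 ∘L J2 = 1 := by ext x; simp [hQ2d, hJ2d]
  have hQ1J2 : Q1 ∘L J2 = 0 := by ext x; simp [hQ1d, hJ2d]
  have hQ2J1 : Q2 ∘L J1 = 0 := by ext x; simp [hQ2d, hJ1d]
  -- structural identity : 1 - M = (1 - U) + J2 ∘L ((1-Z) ∘L (Q2 ∘L U))
  have hMU : (1 : (H₁ × H₂) →L[ℂ] (H₁ × H₂)) - M
      = (1 - U) + J2 ∘L ((1 - Z) ∘L (Q2 ∘L U)) := by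
    rw [hUdef, hMdef]
    ext v <;>
      simp [blockOp, hQ1d, hQ2d, hJ1d, hJ2d] <;>
      abel
  obtain ⟨Y, hYd⟩ : ∃ x, x = (1 - Z) ∘L (Q2 ∘L (E - 1)) := ⟨_, rfl⟩
  have hUE : U ∘L E = E - 1 := by
    have h := hE1
    rw [sub_comp, one_def, id_comp, ← one_def] at h
    rw [← h]; abel
  have hZF : Z ∘L F = F - 1 := by
    have h := hF2
    rw [sub_comp, one_def, id_comp, ← one_def] at h
    rw [← h]; abel
  have hME : (1 - M) ∘L E = 1 + J2 ∘L Y := by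
    rw [hMU, add_comp, hE1]
    congr 1
    simp only [comp_assoc, hUE, hYd]
  obtain ⟨V, hVd⟩ : ∃ x, x = (1 - U) ∘L N := ⟨_, rfl⟩
  have hV1 : (1 + J2 ∘L Y) ∘L V = 1 := by
    rw [← hME, hVd, comp_assoc, ccl hE2, hN1]
  have hV2 : V ∘L (1 + J2 ∘L Y) = 1 := by
    rw [← hME, hVd, comp_assoc, ccl hN2, hE1]
  obtain ⟨S, hSd⟩ : ∃ x, x = (1 : H₂ →L[ℂ] H₂) + Y ∘L J2 := ⟨_, rfl⟩
  obtain ⟨Sinv, hSid⟩ : ∃ x, x = (1 : H₂ →L[ℂ] H₂) - Y ∘L (V ∘L J2) := ⟨_, rfl⟩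
  have key1 : V ∘L J2 + J2 ∘L (Y ∘L (V ∘L J2)) = J2 := by
    have h := ccl hV1 J2
    rw [add_comp, one_def, id_comp, comp_assoc] at h
    exact h
  have hS1 : S ∘L Sinv = 1 := by
    have key2 : Y ∘L (V ∘L J2) + Y ∘L (J2 ∘L (Y ∘L (V ∘L J2))) = Y ∘L J2 := by
      have h := congrArg (fun t => Y ∘L t) key1
      simpa only [comp_add] using h
    have hab : (Y ∘L J2) ∘L (Y ∘L (V ∘L J2)) = Y ∘L (J2 ∘L (Y ∘L (V ∘L J2))) := by
      simp only [comp_assoc]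
    have expand : ((1 : H₂ →L[ℂ] H₂) + Y ∘L J2) * (1 - Y ∘L (V ∘L J2))
        = 1 + (Y ∘L J2) - (Y ∘L (V ∘L J2) + (Y ∘L J2) * (Y ∘L (V ∘L J2))) := by
      noncomm_ring
    rw [hSd, hSid, ← mul_def, expand, mul_def, hab, key2]
    abel
  have key3 : V ∘L J2 + V ∘L (J2 ∘L (Y ∘L J2)) = J2 := by
    have h := congrArg (fun t => V ∘L t) (show (1 + J2 ∘L Y) ∘L J2 = J2 + J2 ∘L (Y ∘L J2) by
      rw [add_comp, one_def, id_comp, comp_assoc])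
    simp only [comp_add] at h
    rw [← comp_assoc, hV2, one_def, id_comp] at h
    exact h.symm
  have hS2 : Sinv ∘L S = 1 := by
    have key4 : Y ∘L (V ∘L J2) + Y ∘L (V ∘L (J2 ∘L (Y ∘L J2))) = Y ∘L J2 := by
      have h := congrArg (fun t => Y ∘L t) key3
      simpa only [comp_add] using h
    have hab : (Y ∘L (V ∘L J2)) ∘L (Y ∘L J2) = Y ∘L (V ∘L (J2 ∘L (Y ∘L J2))) := by
      simp only [comp_assoc]
    have expand : ((1 : H₂ →L[ℂ] H₂) - Y ∘L (V ∘L J2)) * (1 + Y ∘L J2)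
        = 1 + (Y ∘L J2) - (Y ∘L (V ∘L J2) + (Y ∘L (V ∘L J2)) * (Y ∘L J2)) := by
      noncomm_ring
    rw [hSd, hSid, ← mul_def, expand, mul_def, hab, key4]
    abel
  obtain ⟨K, hKd⟩ : ∃ x, x = F + Q2 ∘L (E ∘L J2) - 1 := ⟨_, rfl⟩
  obtain ⟨Kinv, hKid⟩ : ∃ x, x = Sinv ∘L (1 - Z) := ⟨_, rfl⟩
  have hYJ2 : Y ∘L J2 = (1 - Z) ∘L (Q2 ∘L (E ∘L J2)) - (1 - Z) := by
    rw [hYd]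
    simp only [comp_assoc, sub_comp, comp_sub, one_def, id_comp, comp_id, hQ2J2]
  have hFYJ2 : F ∘L (Y ∘L J2) = Q2 ∘L (E ∘L J2) - 1 := by
    rw [hYJ2, comp_sub, ccl hF1, hF1]
  have hKFS : K = F ∘L S := by
    rw [hSd, comp_add, hFYJ2, hKd,
      show F ∘L (1 : H₂ →L[ℂ] H₂) = F by rw [one_def, comp_id]]
    abel
  have hK1 : K ∘L Kinv = 1 := by
    rw [hKFS, hKid, comp_assoc, ccl hS1, hF1]
  have hK2 : Kinv ∘L K = 1 := by
    rw [hKFS, hKid, comp_assoc, ccl hF2, hS2]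
  -- Cayley transforms in terms of resolvents
  have hTE : T = Complex.I • (E + E - 1) := by
    rw [hTdef]
    congr 1
    rw [add_mul, one_mul, mul_def, hUE]
    abel
  have hWF : W = Complex.I • (F + F - 1) := by
    rw [hWdef]
    congr 1
    rw [add_mul, one_mul, mul_def, hZF]
    abel
  -- block entries of T
  have hT11 : T₁₁ = Complex.I • (Q1 ∘L (E ∘L J1) + Q1 ∘L (E ∘L J1) - 1) := by
    rw [hT₁₁, hTE]
    simp only [comp_smulₛₗ, smul_comp, RingHom.id_apply, comp_add, add_comp, comp_sub, sub_comp, one_def,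
      id_comp, comp_id, comp_assoc, hQ1J1]
  have hT12 : T₁₂ = Complex.I • (Q1 ∘L (E ∘L J2) + Q1 ∘L (E ∘L J2)) := by
    rw [hT₁₂, hTE]
    simp only [comp_smulₛₗ, smul_comp, RingHom.id_apply, comp_add, add_comp, comp_sub, sub_comp, one_def,
      id_comp, comp_id, comp_assoc, hQ1J2, sub_zero]
  have hT21 : T₂₁ = Complex.I • (Q2 ∘L (E ∘L J1) + Q2 ∘L (E ∘L J1)) := by
    rw [hT₂₁, hTE]
    simp only [comp_smulₛₗ, smul_comp, RingHom.id_apply, comp_add, add_comp, comp_sub, sub_comp, one_def,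
      id_comp, comp_id, comp_assoc, hQ2J1, sub_zero]
  have hT22 : T₂₂ = Complex.I • (Q2 ∘L (E ∘L J2) + Q2 ∘L (E ∘L J2) - 1) := by
    rw [hT₂₂, hTE]
    simp only [comp_smulₛₗ, smul_comp, RingHom.id_apply, comp_add, add_comp, comp_sub, sub_comp, one_def,
      id_comp, comp_id, comp_assoc, hQ2J2]
  have hWT : W + T₂₂ = Complex.I • (K + K) := by
    rw [hWF, hT22, ← smul_add, hKd]
    congr 1
    abel
  -- invertibility of W + T₂₂
  have hc : Complex.I * (-Complex.I / 2) = 1 / 2 := by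
    have h := Complex.I_mul_I
    linear_combination (-1 / 2 : ℂ) * h
  have hc2 : -Complex.I / 2 * Complex.I = 1 / 2 := by
    linear_combination (-1 / 2 : ℂ) * Complex.I_mul_I
  have hK1' : K * Kinv = 1 := hK1
  have hK2' : Kinv * K = 1 := hK2
  have hq1 : (W + T₂₂) * ((-Complex.I / 2) • Kinv) = 1 := by
    rw [hWT, smul_mul_assoc, mul_smul_comm, smul_smul, hc, add_mul, hK1']
    module
  have hq2' : ((-Complex.I / 2) • Kinv) * (W + T₂₂) = 1 := by
    rw [hWT, mul_smul_comm, smul_mul_assoc, smul_smul, hc, mul_add, hK2']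
    module
  have hWTunit : IsUnit (W + T₂₂) := isUnit_iff_exists.mpr ⟨_, hq1, hq2'⟩
  refine ⟨hWTunit, ?_⟩
  have hWTinv : Ring.inverse (W + T₂₂) = (-Complex.I / 2) • Kinv :=
    Ring.inverse_unit ⟨W + T₂₂, (-Complex.I / 2) • Kinv, hq1, hq2'⟩
  -- the Woodbury form of V and of N ∘L J1
  have key5 : Sinv ∘L Y + (Y ∘L J2) ∘L (Sinv ∘L Y) = Y := by
    have h := ccl hS1 Y
    rw [hSd, add_comp, one_def, id_comp] at h
    exact h
  have keyV : (1 + J2 ∘L Y) ∘L (1 - J2 ∘L (Sinv ∘L Y)) = 1 := by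
    have key6 : J2 ∘L (Sinv ∘L Y) + J2 ∘L ((Y ∘L J2) ∘L (Sinv ∘L Y)) = J2 ∘L Y := by
      have h := congrArg (fun t => J2 ∘L t) key5
      simpa only [comp_add] using h
    have hab : (J2 ∘L Y) ∘L (J2 ∘L (Sinv ∘L Y)) = J2 ∘L ((Y ∘L J2) ∘L (Sinv ∘L Y)) := by
      simp only [comp_assoc]
    have expand : ((1 : (H₁ × H₂) →L[ℂ] (H₁ × H₂)) + J2 ∘L Y) * (1 - J2 ∘L (Sinv ∘L Y))
        = 1 + (J2 ∘L Y) - (J2 ∘L (Sinv ∘L Y) + (J2 ∘L Y) * (J2 ∘L (Sinv ∘L Y))) := by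
      simp only [mul_one, one_mul, mul_sub, sub_mul, add_mul, mul_add]
      try abel
    rw [← mul_def, expand, mul_def, hab, key6]
    abel
  have hVform : V = 1 - J2 ∘L (Sinv ∘L Y) := by
    have h1 := congrArg (fun t => V ∘L t) keyV
    rw [← comp_assoc, hV2, one_def, id_comp, comp_id] at h1
    exact h1.symm
  have hNE : N = E ∘L V := by
    rw [hVd, ccl hE2]
  have hYJ1 : Y ∘L J1 = (1 - Z) ∘L (Q2 ∘L (E ∘L J1)) := by
    rw [hYd]
    simp only [comp_assoc, sub_comp, comp_sub, one_def, id_comp, hQ2J1, comp_zero, sub_zero,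
      zero_sub, sub_self, sub_neg_eq_add, add_zero]
  have hSKi : ∀ (q : H₁ →L[ℂ] H₂), Sinv ∘L ((1 - Z) ∘L q) = Kinv ∘L q := by
    intro q; rw [hKid, comp_assoc]
  have hNJ1 : N ∘L J1 = E ∘L J1 - E ∘L (J2 ∘L (Kinv ∘L (Q2 ∘L (E ∘L J1)))) := by
    rw [hNE, hVform, comp_sub, comp_one', sub_comp]
    congr 1
    simp only [comp_assoc]
    rw [hYJ1, hSKi]
  -- Θ in resolvent form
  have hN1plus : N ∘L (1 + M) = N + N - 1 := by
    have hNM : N ∘L M = N - 1 := by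
      have h := hN2
      rw [comp_sub, comp_one'] at h
      rw [← h]; abel
    rw [comp_add, hNM, comp_one']
    abel
  have hΘcalc : Θ = Q1 ∘L (N ∘L J1) + Q1 ∘L (N ∘L J1) - 1 := by
    rw [hΘdef, ← comp_assoc N (1 + M) J1, hN1plus]
    simp only [comp_add, add_comp, comp_sub, sub_comp, one_def, id_comp, comp_id,
      comp_assoc, hQ1J1, RingHom.id_apply]
  -- final computation
  rw [hΨdef, hΘcalc, hNJ1, hT11, hT12, hT21, hWTinv]
  simp only [smul_comp, comp_smulₛₗ, RingHom.id_apply, comp_add, add_comp, comp_sub, sub_comp,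
    smul_smul, comp_assoc]
  match_scalars <;>
    first
      | ring1
      | linear_combination (-2 * Complex.I) * Complex.I_mul_I
end

section
/- Let H be a complex Hilbert space, let S : H → H be a linear isometry (‖Sx‖ = ‖x‖ for all x), let λ ∈ ℂ with |λ| = 1, and let f, g ∈ H satisfy f = g + λ·S(f) and ⟨Sⁿ g, g⟩ = 0 for every integer n ≥ 1. Then g = 0. -/
open scoped InnerProductSpace

theorem vanishing_from_shift_orthogonality
    {H : Type*} [NormedAddCommGroup H] [InnerProductSpace ℂ H]
    (S : H →ₗᵢ[ℂ] H) (lam : ℂ) (hlam : ‖lam‖ = 1)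
    (f g : H) (hf : f = g + lam • S f)
    (horth : ∀ n : ℕ, 1 ≤ n → ⟪(S.toLinearMap ^ n) g, g⟫_ℂ = 0) :
    g = 0 := by
  have hpow : ∀ (n : ℕ) (x : H), (S.toLinearMap ^ (n+1)) x = (S.toLinearMap ^ n) (S x) := by
    intro n x; rw [pow_succ]; rfl
  have hinner : ∀ (n : ℕ) (x y : H),
      ⟪(S.toLinearMap ^ n) x, (S.toLinearMap ^ n) y⟫_ℂ = ⟪x, y⟫_ℂ := by
    intro n
    induction n with
    | zero => intro x y; simp
    | succ n ih => intro x y; rw [hpow, hpow, ih, S.inner_map_map]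
  have hnormpow : ∀ (n : ℕ) (x : H), ‖(S.toLinearMap ^ n) x‖ = ‖x‖ := by
    intro n
    induction n with
    | zero => intro x; simp
    | succ n ih => intro x; rw [hpow, ih, S.norm_map]
  have base : ∀ p q : ℕ, p ≠ q →
      ⟪(S.toLinearMap ^ p) g, (S.toLinearMap ^ q) g⟫_ℂ = 0 := by
    have h1 : ∀ p q : ℕ, p < q →
        ⟪(S.toLinearMap ^ p) g, (S.toLinearMap ^ q) g⟫_ℂ = 0 := by
      intro p q hpq
      obtain ⟨d, rfl⟩ : ∃ d, q = p + (d + 1) := ⟨q - p - 1, by omega⟩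
      have hq : (S.toLinearMap ^ (p + (d + 1))) g
          = (S.toLinearMap ^ p) ((S.toLinearMap ^ (d + 1)) g) := by
        rw [pow_add]; rfl
      rw [hq, hinner, ← inner_conj_symm, horth (d + 1) (by omega), map_zero]
    intro p q hpq
    rcases lt_or_gt_of_ne hpq with h | h
    · exact h1 p q h
    · rw [← inner_conj_symm, h1 q p h, map_zero]
  set a : ℕ → H := fun k => lam ^ k • (S.toLinearMap ^ k) g with ha
  have hortho : ∀ j k : ℕ, j ≠ k → ⟪a j, a k⟫_ℂ = 0 := by
    intro j k hjk
    simp [ha, inner_smul_left, inner_smul_right, base j k hjk]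
  have hna : ∀ k, ‖a k‖ = ‖g‖ := by
    intro k
    simp [ha, norm_smul, norm_pow, hlam, hnormpow]
  have hsum : ∀ N : ℕ,
      f = (∑ k ∈ Finset.range N, a k) + lam ^ N • (S.toLinearMap ^ N) f := by
    intro N
    induction N with
    | zero => simp
    | succ N ih =>
      have hSf : (S.toLinearMap ^ N) f
          = (S.toLinearMap ^ N) g + lam • (S.toLinearMap ^ (N+1)) f := by
        conv_lhs => rw [hf]
        rw [map_add, map_smul, hpow]
      calc f = (∑ k ∈ Finset.range N, a k) + lam ^ N • (S.toLinearMap ^ N) f := ih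
        _ = (∑ k ∈ Finset.range N, a k) + (a N + lam ^ (N+1) • (S.toLinearMap ^ (N+1)) f) := by
            rw [hSf, smul_add, smul_smul, ← pow_succ]
        _ = (∑ k ∈ Finset.range (N+1), a k) + lam ^ (N+1) • (S.toLinearMap ^ (N+1)) f := by
            rw [Finset.sum_range_succ, add_assoc]
  have hnormsum : ∀ N : ℕ, ‖∑ k ∈ Finset.range N, a k‖ ^ 2 = (N : ℝ) * ‖g‖ ^ 2 := by
    intro N
    have h : ⟪∑ k ∈ Finset.range N, a k, ∑ k ∈ Finset.range N, a k⟫_ℂ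
        = ∑ k ∈ Finset.range N, ⟪a k, a k⟫_ℂ := by
      rw [sum_inner]
      refine Finset.sum_congr rfl fun j hj => ?_
      rw [inner_sum, Finset.sum_eq_single j (fun k _ hkj => hortho j k (Ne.symm hkj))
        (fun h => absurd hj h)]
    rw [norm_sq_eq_re_inner (𝕜 := ℂ), h]
    have h2 : ∀ k ∈ Finset.range N, RCLike.re ⟪a k, a k⟫_ℂ = ‖g‖ ^ 2 := by
      intro k _
      rw [← norm_sq_eq_re_inner (𝕜 := ℂ), hna]
    rw [map_sum, Finset.sum_congr rfl h2, Finset.sum_const, Finset.card_range, nsmul_eq_mul]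
  have hbound : ∀ N : ℕ, (N : ℝ) * ‖g‖ ^ 2 ≤ (2 * ‖f‖) ^ 2 := by
    intro N
    have hs : ‖∑ k ∈ Finset.range N, a k‖ ≤ 2 * ‖f‖ := by
      have : (∑ k ∈ Finset.range N, a k) = f - lam ^ N • (S.toLinearMap ^ N) f := by
        exact eq_sub_of_add_eq (hsum N).symm
      rw [this]
      calc ‖f - lam ^ N • (S.toLinearMap ^ N) f‖
          ≤ ‖f‖ + ‖lam ^ N • (S.toLinearMap ^ N) f‖ := norm_sub_le _ _
        _ = 2 * ‖f‖ := by rw [norm_smul, norm_pow, hlam, one_pow, one_mul, hnormpow]; ring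
    calc (N : ℝ) * ‖g‖ ^ 2 = ‖∑ k ∈ Finset.range N, a k‖ ^ 2 := (hnormsum N).symm
      _ ≤ (2 * ‖f‖) ^ 2 := by
          apply pow_le_pow_left₀ (norm_nonneg _) hs
  by_contra hg
  have hg' : 0 < ‖g‖ := norm_pos_iff.mpr hg
  have hgpos : 0 < ‖g‖ ^ 2 := by positivity
  obtain ⟨N, hN⟩ := exists_nat_gt ((2 * ‖f‖) ^ 2 / ‖g‖ ^ 2)
  have := hbound N
  have h3 : (N : ℝ) * ‖g‖ ^ 2 > (2 * ‖f‖) ^ 2 := by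
    rw [gt_iff_lt, ← div_lt_iff₀ hgpos]
    exact hN
  linarith
end

section
/- Let d ≥ 1, let Π^d = {z ∈ ℂ^d : Im(z_j) > 0 for all j} be the poly upper half-plane, and let C ⊆ (0, ∞)^d be a nonempty open cone in ℝ^d (i.e., C is open in ℝ^d and tx ∈ C whenever x ∈ C and t > 0), regarded as a subset of ℂ^d via the standard inclusion ℝ^d ⊆ ℂ^d. Let Ω ⊆ ℂ^d be an open set with Π^d ∪ C ⊆ Ω, and let f be analytic (holomorphic) on Ω. If f(tx) = t·f(x) for every x ∈ C and every t > 0, then f(tz) = t·f(z) for every z ∈ Π^d and every t > 0. -/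
open Complex

/-- The poly upper half-plane in `ℂ^d`. -/
def polyUpperHalfPlane (d : ℕ) : Set (Fin d → ℂ) :=
  {z | ∀ j, 0 < (z j).im}

/-- The standard inclusion of `ℝ^d` into `ℂ^d`. -/
def realInclusion {d : ℕ} (x : Fin d → ℝ) : Fin d → ℂ := fun j => (x j : ℂ)

/-- If an analytic function on a polydisc (a sup-metric ball in `ℂ^d`) centered at a real
point vanishes at all real points of the polydisc, it vanishes on the whole polydisc. -/
lemma vanish_on_ball {d : ℕ} (f : (Fin d → ℂ) → ℂ) (x₀ : Fin d → ℝ) (r : ℝ) (hr : 0 < r)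
    (hf : AnalyticOnNhd ℂ f (Metric.ball (realInclusion x₀) r))
    (h0 : ∀ x : Fin d → ℝ, realInclusion x ∈ Metric.ball (realInclusion x₀) r →
      f (realInclusion x) = 0) :
    ∀ z ∈ Metric.ball (realInclusion x₀) r, f z = 0 := by
  -- key induction: `P k` says f vanishes on points of the ball whose coordinates ≥ k are real
  suffices H : ∀ k : ℕ, ∀ z ∈ Metric.ball (realInclusion x₀) r,
      (∀ j : Fin d, k ≤ (j : ℕ) → (z j).im = 0) → f z = 0 by
    intro z hz
    exact H d z hz (fun j hj => absurd j.isLt (by omega))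
  intro k
  induction k with
  | zero =>
    intro z hz him
    have hz' : z = realInclusion (fun j => (z j).re) := by
      funext j
      exact (Complex.ext_iff.2 ⟨by simp [realInclusion], by simp [realInclusion, him j (by omega)]⟩)
    rw [hz']
    exact h0 _ (hz' ▸ hz)
  | succ k ih =>
    intro z hz him
    by_cases hk : k < d
    · set K : Fin d := ⟨k, hk⟩ with hK
      -- one-variable slice through coordinate K
      set φ : ℂ → ℂ := fun w => f (Function.update z K w) with hφdef
      have hmem : ∀ w : ℂ, w ∈ Metric.ball ((x₀ K : ℂ)) r →
          Function.update z K w ∈ Metric.ball (realInclusion x₀) r := by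
        intro w hw
        rw [Metric.mem_ball, dist_pi_lt_iff hr]
        intro j
        by_cases hj : j = K
        · subst hj; simpa [realInclusion] using hw
        · rw [Function.update_of_ne hj]
          exact (dist_pi_lt_iff hr).1 hz j
      have hupd : ∀ w : ℂ, AnalyticAt ℂ (fun w : ℂ => Function.update z K w) w := by
        intro w
        have : (fun w : ℂ => Function.update z K w) =
            fun w => Function.update z K 0 + w • Pi.single K (1 : ℂ) := by
          funext w j
          by_cases hj : j = K
          · subst hj; simp
          · simp [Function.update_of_ne hj, Pi.single_eq_of_ne hj]
        rw [this]
        exact analyticAt_const.add ((analyticAt_id).smul analyticAt_const)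
      have hφan : AnalyticOnNhd ℂ φ (Metric.ball ((x₀ K : ℂ)) r) := by
        intro w hw
        exact (hf _ (hmem w hw)).comp (hupd w)
      -- φ vanishes at real points near x₀ K
      have hφreal : ∀ u : ℝ, |u - x₀ K| < r → φ ((u : ℝ) : ℂ) = 0 := by
        intro u hu
        apply ih
        · apply hmem
          simpa [Complex.dist_eq, Complex.norm_real, ← Complex.ofReal_sub] using hu
        · intro j hj
          by_cases hjK : j = K
          · subst hjK; simp
          · rw [Function.update_of_ne hjK]
            have hne : (j : ℕ) ≠ k := fun h => hjK (Fin.val_injective (by simpa using h))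
            exact him j (by omega)
      -- hence φ vanishes frequently near x₀ K
      have hfreq : ∃ᶠ w in nhdsWithin ((x₀ K : ℂ)) {((x₀ K : ℂ))}ᶜ, φ w = 0 := by
        have htend : Filter.Tendsto (fun u : ℝ => ((u : ℝ) : ℂ))
            (nhdsWithin (x₀ K) (Set.Ioi (x₀ K))) (nhdsWithin ((x₀ K : ℂ)) {((x₀ K : ℂ))}ᶜ) := by
          apply tendsto_nhdsWithin_of_tendsto_nhds_of_eventually_within
          · exact Complex.continuous_ofReal.continuousAt.tendsto.mono_left nhdsWithin_le_nhds
          · filter_upwards [self_mem_nhdsWithin] with u hu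
            simp only [Set.mem_compl_iff, Set.mem_singleton_iff]
            exact fun h => absurd (Complex.ofReal_injective h) (ne_of_gt hu)
        apply htend.frequently
        apply Filter.Eventually.frequently
        filter_upwards [Ioo_mem_nhdsGT_of_mem (by constructor <;> [rfl; linarith] :
          x₀ K ∈ Set.Ico (x₀ K) (x₀ K + r))] with u hu
        exact hφreal u (by rw [abs_sub_lt_iff]; constructor <;> [linarith [hu.2]; linarith [hu.1]])
      have hEq : Set.EqOn φ 0 (Metric.ball ((x₀ K : ℂ)) r) :=
        hφan.eqOn_zero_of_preconnected_of_frequently_eq_zero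
          (convex_ball _ _).isPreconnected (Metric.mem_ball_self hr) hfreq
      have hzK : z K ∈ Metric.ball ((x₀ K : ℂ)) r := by
        simpa [realInclusion] using (dist_pi_lt_iff hr).1 hz K
      have := hEq hzK
      simpa [hφdef, Function.update_eq_self] using this
    · -- k ≥ d : condition for k already vacuous
      exact ih z hz (fun j hj => absurd j.isLt (by omega))

lemma convex_polyUpperHalfPlane (d : ℕ) : Convex ℝ (polyUpperHalfPlane d) := by
  intro z hz w hw a b ha hb hab
  intro j
  have hz' := hz j
  have hw' := hw j
  have heq : ((a • z + b • w) j).im = a * (z j).im + b * (w j).im := by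
    simp [Complex.add_im, Complex.smul_im]
  rw [heq]
  rcases eq_or_lt_of_le ha with h | h
  · rw [← h] at hab ⊢; simp at hab ⊢; nlinarith
  · nlinarith

theorem homogeneity_extends_to_polyUpperHalfPlane
    (d : ℕ) (hd : 1 ≤ d)
    (C : Set (Fin d → ℝ)) (hCne : C.Nonempty) (hCopen : IsOpen C)
    (hCpos : ∀ x ∈ C, ∀ j, 0 < x j)
    (hCcone : ∀ x ∈ C, ∀ t : ℝ, 0 < t → t • x ∈ C)
    (Ω : Set (Fin d → ℂ)) (hΩopen : IsOpen Ω)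
    (hΩsub : polyUpperHalfPlane d ∪ realInclusion '' C ⊆ Ω)
    (f : (Fin d → ℂ) → ℂ) (hf : AnalyticOnNhd ℂ f Ω)
    (hhom : ∀ x ∈ C, ∀ t : ℝ, 0 < t → f (realInclusion (t • x)) = t * f (realInclusion x)) :
    ∀ z ∈ polyUpperHalfPlane d, ∀ t : ℝ, 0 < t → f ((t : ℂ) • z) = t * f z := by
  intro z hz t ht
  obtain ⟨x₀, hx₀⟩ := hCne
  set g : (Fin d → ℂ) → ℂ := fun z => f ((t : ℂ) • z) - t * f z with hg
  set Ωt : Set (Fin d → ℂ) := Ω ∩ (fun z => (t : ℂ) • z) ⁻¹' Ω with hΩt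
  have hΩtopen : IsOpen Ωt :=
    hΩopen.inter (hΩopen.preimage (continuous_const_smul _))
  have hPiSub : polyUpperHalfPlane d ⊆ Ωt := by
    intro w hw
    refine ⟨hΩsub (Or.inl hw), hΩsub (Or.inl ?_)⟩
    intro j
    simp only [Pi.smul_apply, Complex.smul_im]
    calc (0:ℝ) < t * (w j).im := mul_pos ht (hw j)
    _ = ((t:ℂ) * w j).im := by simp [Complex.mul_im]
  have hCsub : ∀ x ∈ C, realInclusion x ∈ Ωt := by
    intro x hx
    constructor
    · exact hΩsub (Or.inr ⟨x, hx, rfl⟩)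
    · have : (t : ℂ) • realInclusion x = realInclusion (t • x) := by
        funext j; simp [realInclusion]
      simp only [Set.mem_preimage, this]
      exact hΩsub (Or.inr ⟨t • x, hCcone x hx t ht, rfl⟩)
  have hgan : AnalyticOnNhd ℂ g Ωt := by
    intro w hw
    have h1 : AnalyticAt ℂ (fun z : Fin d → ℂ => f ((t : ℂ) • z)) w := by
      have hlin : AnalyticAt ℂ (fun z : Fin d → ℂ => (t : ℂ) • z) w :=
        analyticAt_id.fun_const_smul
      exact (hf _ hw.2).comp hlin
    exact h1.sub (analyticAt_const.mul (hf _ hw.1))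
  have hgC : ∀ x ∈ C, g (realInclusion x) = 0 := by
    intro x hx
    have h1 : (t : ℂ) • realInclusion x = realInclusion (t • x) := by
      funext j; simp [realInclusion]
    simp only [hg, h1, hhom x hx t ht, sub_self]
  -- choose a small polydisc around x₀ inside Ωt whose real points lie in C
  obtain ⟨r₁, hr₁, hball₁⟩ := Metric.isOpen_iff.1 hCopen x₀ hx₀
  obtain ⟨r₂, hr₂, hball₂⟩ := Metric.isOpen_iff.1 hΩtopen _ (hCsub x₀ hx₀)
  set r : ℝ := min r₁ r₂ with hrdef
  have hr : 0 < r := lt_min hr₁ hr₂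
  have hdist_eq : ∀ x : Fin d → ℝ, dist (realInclusion x) (realInclusion x₀) = dist x x₀ := by
    intro x
    rw [dist_pi_def, dist_pi_def]
    congr 1
    apply Finset.sup_congr rfl
    intro j _
    simp only [realInclusion]
    exact Complex.isometry_ofReal.nndist_eq _ _
  have hballΩ : Metric.ball (realInclusion x₀) r ⊆ Ωt :=
    fun w hw => hball₂ (Metric.ball_subset_ball (min_le_right _ _) hw)
  have hgball : ∀ w ∈ Metric.ball (realInclusion x₀) r, g w = 0 := by
    apply vanish_on_ball g x₀ r hr (fun w hw => hgan w (hballΩ hw))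
    intro x hx
    apply hgC
    apply hball₁
    rw [Metric.mem_ball, ← hdist_eq]
    exact lt_of_lt_of_le hx (min_le_left _ _)
  -- identity theorem on Π^d ∪ ball
  set p : Fin d → ℂ := fun j => (x₀ j : ℂ) + (r / 2) * Complex.I with hp
  have hpPi : p ∈ polyUpperHalfPlane d := by
    intro j
    simp [hp, Complex.add_im, Complex.mul_im]
    linarith
  have hpball : p ∈ Metric.ball (realInclusion x₀) r := by
    rw [Metric.mem_ball, dist_pi_lt_iff hr]
    intro j
    simp only [hp, realInclusion, Complex.dist_eq]
    have : (x₀ j : ℂ) + (r / 2) * Complex.I - (x₀ j : ℂ) = (r / 2) * Complex.I := by ring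
    rw [this, norm_mul, Complex.norm_I, mul_one]
    have h2 : ((r : ℂ) / 2) = ((r / 2 : ℝ) : ℂ) := by norm_num
    rw [h2, Complex.norm_real, Real.norm_eq_abs, abs_of_pos (by linarith)]
    linarith
  set U : Set (Fin d → ℂ) := polyUpperHalfPlane d ∪ Metric.ball (realInclusion x₀) r with hU
  have hUopen : IsOpen U := by
    apply IsOpen.union _ Metric.isOpen_ball
    have : polyUpperHalfPlane d = ⋂ j, (fun z : Fin d → ℂ => (z j).im) ⁻¹' Set.Ioi 0 := by
      ext w; simp [polyUpperHalfPlane]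
    rw [this]
    exact isOpen_iInter_of_finite fun j =>
      (isOpen_Ioi.preimage (Complex.continuous_im.comp (continuous_apply j)))
  have hUconn : IsPreconnected U :=
    IsPreconnected.union p hpPi hpball (convex_polyUpperHalfPlane d).isPreconnected
      (convex_ball _ _).isPreconnected
  have hUsub : U ⊆ Ωt := Set.union_subset hPiSub hballΩ
  have hEq : Set.EqOn g 0 U := by
    apply AnalyticOnNhd.eqOn_zero_of_preconnected_of_eventuallyEq_zero
      (fun w hw => hgan w (hUsub hw)) hUconn (Or.inr hpball)
    filter_upwards [Metric.isOpen_ball.mem_nhds hpball] with w hw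
    exact hgball w hw
  have := hEq (Or.inl hz)
  simpa [hg, sub_eq_zero] using this
end
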